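/- arXiv:1812.09979 — 2 statements merged into one kernel-verified Lean document; each statement's English description precedes it below -/
import Mathlib

section
/- Let R be a commutative Noetherian local ring of dimension 1 with nilradical I such that R/I is a discrete valuation ring and every zerodivisor of R lies in I. Suppose the associated graded modules M_n/M_{n-1} of the filtration M_n = (0 : I^n) are free over R/I of rank r_n, with r = Σ_n r_n. Then for every f ∈ R whose image in R/I is nonzero, length_R(R/(f)) = r · length_{R/I}((R/I)/(f̄)), where f̄ is the image of f. -/
open Order

section OrderLemmas

variable {α β : Type*} [Preorder α] [Preorder β]

lemma height_add_one_le_height {a b : α} (h : a < b) : height a + 1 ≤ height b := by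
  by_cases hfin : height a < ⊤
  · exact (ENat.add_one_le_iff hfin.ne).mpr (height_strictMono h hfin)
  · push_neg at hfin
    have : height a ≤ height b := height_mono h.le
    have htop : height a = ⊤ := top_le_iff.mp hfin
    rw [htop] at this ⊢
    simpa using this

lemma ltSeries_prod_length_le (p : LTSeries (α × β)) :
    (p.length : ℕ∞) ≤ height p.last.1 + height p.last.2 := by
  obtain ⟨n, hn⟩ : ∃ n, p.length = n := ⟨_, rfl⟩
  induction n generalizing p with
  | zero => rw [hn]; simp
  | succ n ih =>
    rw [hn]
    have hne : p.length ≠ 0 := by omega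
    have hlt : p.eraseLast.last < p.last := p.eraseLast_last_rel_last hne
    have hlen : p.eraseLast.length = n := by simp [RelSeries.eraseLast, hn]
    have H := ih p.eraseLast hlen
    rw [hlen] at H
    have hcases : p.eraseLast.last.1 < p.last.1 ∨ p.eraseLast.last.2 < p.last.2 := by
      rcases Prod.lt_iff.mp hlt with ⟨h1, h2⟩ | ⟨h1, h2⟩
      · exact Or.inl h1
      · exact Or.inr h2
    have hle1 : height p.eraseLast.last.1 ≤ height p.last.1 := height_mono hlt.le.1
    have hle2 : height p.eraseLast.last.2 ≤ height p.last.2 := height_mono hlt.le.2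
    rcases hcases with hc | hc
    · have := height_add_one_le_height hc
      calc ((n + 1 : ℕ) : ℕ∞) = (n : ℕ∞) + 1 := by push_cast; ring
        _ ≤ (height p.eraseLast.last.1 + height p.eraseLast.last.2) + 1 := by
            exact add_le_add_left H 1
        _ = (height p.eraseLast.last.1 + 1) + height p.eraseLast.last.2 := by ring
        _ ≤ height p.last.1 + height p.last.2 := add_le_add this hle2
    · have := height_add_one_le_height hc
      calc ((n + 1 : ℕ) : ℕ∞) = (n : ℕ∞) + 1 := by push_cast; ring
        _ ≤ (height p.eraseLast.last.1 + height p.eraseLast.last.2) + 1 := by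
            exact add_le_add_left H 1
        _ = height p.eraseLast.last.1 + (height p.eraseLast.last.2 + 1) := by ring
        _ ≤ height p.last.1 + height p.last.2 := add_le_add hle1 this

/-- If there is a strict mono map into a product of orders with tops, the Krull dimension is
bounded by the sum of the Krull dimensions. -/
lemma krullDim_le_of_strictMono_prod [OrderTop α] [OrderTop β] {γ : Type*} [Preorder γ]
    (f : γ → α × β) (hf : StrictMono f) {a b : ℕ}
    (ha : krullDim α = (a : WithBot ℕ∞)) (hb : krullDim β = (b : WithBot ℕ∞)) :
    krullDim γ ≤ ((a + b : ℕ) : WithBot ℕ∞) := by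
  have ha' : height (⊤ : α) = (a : ℕ∞) := by
    have h2 := height_top_eq_krullDim (α := α)
    rw [ha] at h2
    exact_mod_cast h2
  have hb' : height (⊤ : β) = (b : ℕ∞) := by
    have h2 := height_top_eq_krullDim (α := β)
    rw [hb] at h2
    exact_mod_cast h2
  rcases isEmpty_or_nonempty γ with h | h
  · rw [krullDim_eq_bot]; exact bot_le
  rw [krullDim_eq_iSup_length]
  rw [show ((a + b : ℕ) : WithBot ℕ∞) = ((((a : ℕ∞) + b) : ℕ∞) : WithBot ℕ∞) by push_cast; rfl]
  rw [WithBot.coe_le_coe]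
  apply iSup_le
  intro p
  have := ltSeries_prod_length_le (p.map f hf)
  simp only [RelSeries.map_length] at this ⊢
  refine this.trans ?_
  have g1 : height ((f p.last).1) ≤ (a:ℕ∞) := ha' ▸ height_mono le_top
  have g2 : height ((f p.last).2) ≤ (b:ℕ∞) := hb' ▸ height_mono le_top
  exact add_le_add g1 g2

end OrderLemmas

section LengthLemmas
variable {R M : Type*} [Ring R] [AddCommGroup M] [Module R M]

lemma krullDim_submodule_congr {N : Type*} [AddCommGroup N] [Module R N] (e : M ≃ₗ[R] N) :
    krullDim (Submodule R M) = krullDim (Submodule R N) :=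
  krullDim_eq_of_orderIso (Submodule.orderIsoMapComap e)

lemma krullDim_submodule_subsingleton [Subsingleton M] : krullDim (Submodule R M) = 0 := by
  haveI : Subsingleton (Submodule R M) := (Submodule.subsingleton_iff R).mpr ‹_›
  haveI : Unique (Submodule R M) := uniqueOfSubsingleton ⊥
  exact krullDim_eq_zero_of_unique

lemma krullDim_submodule_additive (N : Submodule R M) {a b : ℕ}
    (ha : krullDim (Submodule R N) = (a : WithBot ℕ∞))
    (hb : krullDim (Submodule R (M ⧸ N)) = (b : WithBot ℕ∞)) :
    krullDim (Submodule R M) = ((a + b : ℕ) : WithBot ℕ∞) := by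
  apply le_antisymm
  · set g : Submodule R M → Submodule R ↥N × Submodule R (M ⧸ N) :=
      fun P => (P.comap N.subtype, P.map N.mkQ) with hg
    have hmono : Monotone g := fun P Q h => ⟨Submodule.comap_mono h, Submodule.map_mono h⟩
    have hsm : StrictMono g := by
      intro P Q hPQ
      refine lt_of_le_of_ne (hmono hPQ.le) (fun heq => hPQ.ne ?_)
      obtain ⟨h1, h2⟩ := Prod.ext_iff.mp heq
      simp only [hg] at h1 h2
      apply eq_of_le_of_inf_le_of_sup_le (z := N) hPQ.le
      · rw [inf_comm (a := Q), inf_comm (a := P), ← Submodule.map_comap_subtype N P,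
          ← Submodule.map_comap_subtype N Q, h1]
      · rw [sup_comm (a := Q), sup_comm (a := P), ← Submodule.comap_map_mkQ N P,
          ← Submodule.comap_map_mkQ N Q, h2]
    exact krullDim_le_of_strictMono_prod g hsm ha hb
  · have ha' : height (⊤ : Submodule R ↥N) = (a : ℕ∞) := by
      have h2 := height_top_eq_krullDim (α := Submodule R ↥N)
      rw [ha] at h2; exact_mod_cast h2
    have hb' : coheight (⊥ : Submodule R (M ⧸ N)) = (b : ℕ∞) := by
      have h2 := coheight_bot_eq_krullDim (α := Submodule R (M ⧸ N))
      rw [hb] at h2; exact_mod_cast h2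
    obtain ⟨p, hp_last, hp_len⟩ := exists_series_of_height_eq_coe _ ha'
    obtain ⟨q, hq_head, hq_len⟩ := exists_series_of_coheight_eq_coe _ hb'
    have hFm : StrictMono (Submodule.map N.subtype) :=
      Monotone.strictMono_of_injective (fun _ _ h => Submodule.map_mono h)
        (Submodule.map_injective_of_injective N.injective_subtype)
    have hGm : StrictMono (Submodule.comap N.mkQ) :=
      Monotone.strictMono_of_injective (fun _ _ h => Submodule.comap_mono h)
        (Submodule.comap_injective_of_surjective N.mkQ_surjective)
    set p' := p.map _ hFm
    set q' := q.map _ hGm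
    have hconn : p'.last = q'.head := by
      show Submodule.map N.subtype p.last = Submodule.comap N.mkQ q.head
      rw [hp_last, hq_head, Submodule.map_top, Submodule.range_subtype,
        Submodule.comap_bot, Submodule.ker_mkQ]
    have := LTSeries.length_le_krullDim (p'.smash q' hconn)
    have hlen : (p'.smash q' hconn).length = a + b := by
      show p'.length + q'.length = a + b
      simp [p', q', hp_len, hq_len]
    rwa [hlen] at this

end LengthLemmas


section PiLemmas
variable {R : Type*} [CommRing R]

/-- Decompose `Fin (k+1) → Y` as `Y × (Fin k → Y)`. -/
def finSuccPiLEquiv (k : ℕ) (Y : Type*) [AddCommGroup Y] [Module R Y] :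
    (Fin (k + 1) → Y) ≃ₗ[R] Y × (Fin k → Y) where
  toFun x := (x 0, fun i => x i.succ)
  map_add' x y := rfl
  map_smul' c x := rfl
  invFun p := Fin.cons p.1 p.2
  left_inv x := by
    funext i
    refine Fin.cases ?_ ?_ i <;> simp
  right_inv p := by
    refine Prod.ext ?_ ?_ <;> simp

variable {Y Z : Type*} [AddCommGroup Y] [Module R Y] [AddCommGroup Z] [Module R Z]

lemma krullDim_submodule_prod {a b : ℕ}
    (ha : krullDim (Submodule R Y) = (a : WithBot ℕ∞))
    (hb : krullDim (Submodule R Z) = (b : WithBot ℕ∞)) :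
    krullDim (Submodule R (Y × Z)) = ((a + b : ℕ) : WithBot ℕ∞) := by
  apply krullDim_submodule_additive (Submodule.fst R Y Z)
  · rw [krullDim_submodule_congr (Submodule.fstEquiv R Y Z)]; exact ha
  · have hfst : Submodule.fst R Y Z = LinearMap.ker (LinearMap.snd R Y Z) :=
      Submodule.comap_bot _
    have hsurj : Function.Surjective (LinearMap.snd R Y Z) := fun z => ⟨(0, z), rfl⟩
    rw [krullDim_submodule_congr ((Submodule.quotEquivOfEq _ _ hfst).trans
      (LinearMap.quotKerEquivOfSurjective _ hsurj))]
    exact hb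

lemma krullDim_submodule_pi {c : ℕ}
    (hc : krullDim (Submodule R Y) = (c : WithBot ℕ∞)) (k : ℕ) :
    krullDim (Submodule R (Fin k → Y)) = ((k * c : ℕ) : WithBot ℕ∞) := by
  induction k with
  | zero =>
    haveI : Subsingleton (Fin 0 → Y) := ⟨fun a b => funext fun i => i.elim0⟩
    rw [krullDim_submodule_subsingleton]
    norm_num
  | succ k ih =>
    rw [krullDim_submodule_congr (finSuccPiLEquiv k Y),
      krullDim_submodule_prod hc ih]
    norm_num
    ring_nf

end PiLemmas

section Transfer

/-- If `S` is a quotient-like `R`-algebra (surjective structure map), the lattice of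
`R`-submodules of an `S`-module agrees with the lattice of `S`-submodules. -/
lemma krullDim_submodule_restrictScalars {R S Y : Type*} [CommRing R] [CommRing S] [Algebra R S]
    (hsurj : Function.Surjective (algebraMap R S)) [AddCommGroup Y] [Module R Y] [Module S Y]
    [IsScalarTower R S Y] : krullDim (Submodule R Y) = krullDim (Submodule S Y) := by
  apply krullDim_eq_of_orderIso
  refine
    { toFun := fun p =>
        { carrier := p
          add_mem' := fun h1 h2 => p.add_mem h1 h2
          zero_mem' := p.zero_mem
          smul_mem' := by
            intro s y hy
            obtain ⟨r, rfl⟩ := hsurj s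
            rw [algebraMap_smul]
            exact p.smul_mem r hy }
      invFun := fun q => q.restrictScalars R
      left_inv := fun p => rfl
      right_inv := fun q => by ext x; rfl
      map_rel_iff' := Iff.rfl }

end Transfer


section Step
variable {R : Type*} [CommRing R]

lemma step_lemma {f : R} (hf : f ∈ nonZeroDivisors R)
    {V : Type*} [AddCommGroup V] [Module R V]
    {Mn Mn1 : Ideal R} (hle : Mn ≤ Mn1) (habs : ∀ b : R, f * b ∈ Mn1 → b ∈ Mn1)
    {r' : ℕ} (e : (↥Mn1 ⧸ Submodule.comap Mn1.subtype (Mn : Submodule R R)) ≃ₗ[R]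
      (Fin r' → V))
    {lV b : ℕ}
    (hlV : krullDim (Submodule R (V ⧸ LinearMap.range (LinearMap.lsmul R V f)))
      = (lV : WithBot ℕ∞))
    (hb : krullDim (Submodule R (R ⧸ (Mn1 ⊔ Ideal.span {f}))) = (b : WithBot ℕ∞)) :
    krullDim (Submodule R (R ⧸ (Mn ⊔ Ideal.span {f})))
      = ((r' * lV + b : ℕ) : WithBot ℕ∞) := by
  classical
  set A : Ideal R := Mn ⊔ Ideal.span {f} with hA
  set A1 : Ideal R := Mn1 ⊔ Ideal.span {f} with hA1
  have hAA1 : A ≤ A1 := sup_le_sup_right hle _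
  set W : Submodule R ↥Mn1 := Submodule.comap Mn1.subtype (Mn : Submodule R R) with hW
  set T : Submodule R ↥Mn1 := Submodule.comap Mn1.subtype (A : Submodule R R) with hT
  have hWT : W ≤ T := Submodule.comap_mono le_sup_left
  -- the key computation : the image of T in Mn1 ⧸ W is f • (Mn1 ⧸ W)
  have hD : Submodule.map W.mkQ T
      = LinearMap.range (LinearMap.lsmul R (↥Mn1 ⧸ W) f) := by
    apply le_antisymm
    · rintro _ ⟨x, hxT, rfl⟩
      have hxA : (x : R) ∈ A := hxT
      obtain ⟨m, hm, z, hz, hmz⟩ := Submodule.mem_sup.mp hxA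
      obtain ⟨c, hc⟩ := Ideal.mem_span_singleton'.mp hz
      have hfc : f * c ∈ Mn1 := by
        have h1 : (x : R) - m ∈ Mn1 := Mn1.sub_mem x.2 (hle hm)
        have hz' : (x : R) - m = f * c := by rw [← hmz, ← hc]; ring
        rwa [hz'] at h1
      have hcMn1 : c ∈ Mn1 := habs c hfc
      refine ⟨W.mkQ ⟨c, hcMn1⟩, ?_⟩
      rw [LinearMap.lsmul_apply, ← map_smul]
      apply (Submodule.Quotient.eq W).mpr
      rw [hW, Submodule.mem_comap]
      show f • (⟨c, hcMn1⟩ : ↥Mn1) - x ∈ Submodule.comap Mn1.subtype (Mn : Submodule R R)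
      rw [Submodule.mem_comap]
      show f • c - (x : R) ∈ (Mn : Submodule R R)
      have h2 : f • c - (x : R) = -m := by
        rw [smul_eq_mul, ← hmz, ← hc]; ring
      rw [h2]
      exact Mn.neg_mem hm
    · rintro _ ⟨y, rfl⟩
      obtain ⟨y', rfl⟩ := W.mkQ_surjective y
      rw [LinearMap.lsmul_apply, ← map_smul]
      refine Submodule.mem_map_of_mem ?_
      rw [hT, Submodule.mem_comap]
      show f • (y' : R) ∈ (A : Submodule R R)
      rw [smul_eq_mul]
      exact le_sup_right (a := (Mn : Submodule R R))
        (Ideal.mem_span_singleton'.mpr ⟨(y' : R), mul_comm _ _⟩)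
  -- the submodule N := A1/A of R/A
  set N : Submodule R (R ⧸ (A : Submodule R R)) :=
    Submodule.map (Submodule.mkQ (A : Submodule R R)) (A1 : Submodule R R) with hN
  have hmapeq : N = Submodule.map (Submodule.mkQ (A : Submodule R R)) (Mn1 : Submodule R R) := by
    rw [hN, hA1]
    rw [show ((Mn1 ⊔ Ideal.span {f} : Ideal R) : Submodule R R)
      = (Mn1 : Submodule R R) ⊔ (Ideal.span {f} : Submodule R R) from rfl]
    rw [Submodule.map_sup]
    have hbot : Submodule.map (Submodule.mkQ (A : Submodule R R))
        (Ideal.span {f} : Submodule R R) = ⊥ := by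
      rw [eq_bot_iff]
      rintro _ ⟨x, hx, rfl⟩
      have hxA : x ∈ (A : Submodule R R) := le_sup_right (a := (Mn : Submodule R R)) hx
      simp only [Submodule.mkQ_apply, Submodule.mem_bot]
      exact (Submodule.Quotient.mk_eq_zero _).mpr hxA
    rw [hbot, sup_bot_eq]
  -- N is isomorphic to Fin r' → (V ⧸ fV)
  have eN : ↥N ≃ₗ[R] (Fin r' → V ⧸ LinearMap.range (LinearMap.lsmul R V f)) := by
    set φ : ↥Mn1 →ₗ[R] (R ⧸ (A : Submodule R R)) :=
      (Submodule.mkQ (A : Submodule R R)) ∘ₗ Mn1.subtype with hφ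
    have hrange : LinearMap.range φ = N := by
      rw [hφ, LinearMap.range_comp, Submodule.range_subtype, hmapeq]
    have hker : LinearMap.ker φ = T := by
      rw [hφ, LinearMap.ker_comp, Submodule.ker_mkQ]
    have hmape : Submodule.map (e : (↥Mn1 ⧸ W) →ₗ[R] (Fin r' → V))
        (LinearMap.range (LinearMap.lsmul R (↥Mn1 ⧸ W) f))
        = LinearMap.range (LinearMap.lsmul R (Fin r' → V) f) := by
      apply le_antisymm
      · rintro _ ⟨_, ⟨y, rfl⟩, rfl⟩
        exact ⟨e y, by rw [LinearMap.lsmul_apply, LinearMap.lsmul_apply, map_smul]; rfl⟩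
      · rintro _ ⟨u, rfl⟩
        refine ⟨LinearMap.lsmul R _ f (e.symm u), ⟨e.symm u, rfl⟩, ?_⟩
        rw [LinearMap.lsmul_apply, LinearMap.lsmul_apply, map_smul]
        simp
    have hpi : LinearMap.range (LinearMap.lsmul R (Fin r' → V) f)
        = Submodule.pi Set.univ (fun _ => LinearMap.range (LinearMap.lsmul R V f)) := by
      ext x
      constructor
      · rintro ⟨y, rfl⟩ i _
        exact ⟨y i, rfl⟩
      · intro hx
        choose y hy using fun i => hx i (Set.mem_univ i)
        exact ⟨y, funext fun i => hy i⟩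
    exact (LinearEquiv.ofEq _ _ hrange.symm).trans <|
      (LinearMap.quotKerEquivRange φ).symm.trans <|
      (Submodule.quotEquivOfEq _ _ hker).trans <|
      (Submodule.quotientQuotientEquivQuotient W T hWT).symm.trans <|
      (Submodule.quotEquivOfEq _ _ hD).trans <|
      (Submodule.Quotient.equiv _ _ e hmape).trans <|
      (Submodule.quotEquivOfEq _ _ hpi).trans <|
      Submodule.quotientPi _
  apply krullDim_submodule_additive N
  · rw [krullDim_submodule_congr eN]
    exact krullDim_submodule_pi hlV r'
  · rw [krullDim_submodule_congr (Submodule.quotientQuotientEquivQuotient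
      (A : Submodule R R) (A1 : Submodule R R) hAA1)]
    exact hb

end Step



/-- Let `R` be a Noetherian local ring of dimension 1 with nilradical `I`, such that
`R/I` is a DVR and every zerodivisor of `R` is nilpotent.  If the graded pieces of the
filtration `Mₙ = (0 : Iⁿ)` are free over `R/I` of ranks `rₙ` with total rank `rt`,
then for every `f ∈ R` that is nonzero mod `I`,
`length_R (R/(f)) = rt * length_{R/I} ((R/I)/(f̄))`
(lengths expressed as Krull dimensions of the submodule lattices). -/
theorem stmt_17 {R : Type*} [CommRing R] [IsNoetherianRing R] [IsLocalRing R]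
    (hdim : ringKrullDim R = 1)
    [IsDomain (R ⧸ nilradical R)] [IsDiscreteValuationRing (R ⧸ nilradical R)]
    (hzd : ∀ a : R, a ∉ nonZeroDivisors R → a ∈ nilradical R)
    (N : ℕ) (M : ℕ → Ideal R)
    (hM : ∀ n : ℕ, M n = Submodule.colon ⊥ (((nilradical R) ^ n : Ideal R) : Set R))
    (hN : M N = ⊤) (r : ℕ → ℕ)
    (hfree : ∀ n < N,
      Nonempty ((↥(M (n + 1)) ⧸ Submodule.comap (M (n + 1)).subtype (M n)) ≃ₗ[R]
        (Fin (r (n + 1)) → R ⧸ nilradical R)))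
    (rt : ℕ) (hrt : rt = ∑ n ∈ Finset.range N, r (n + 1))
    (f : R) (hf : Ideal.Quotient.mk (nilradical R) f ≠ 0) (l : ℕ)
    (hl : Order.krullDim (Submodule (R ⧸ nilradical R)
        ((R ⧸ nilradical R) ⧸ Ideal.span {Ideal.Quotient.mk (nilradical R) f}))
      = (l : WithBot ℕ∞)) :
    Order.krullDim (Submodule R (R ⧸ Ideal.span {f}))
      = ((rt * l : ℕ) : WithBot ℕ∞) := by
  classical
  have hfnzd : f ∈ nonZeroDivisors R := by
    by_contra h
    exact hf ((Ideal.Quotient.eq_zero_iff_mem).mpr (hzd f h))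
  have habs : ∀ n (b : R), f * b ∈ M n → b ∈ M n := by
    intro n b hb
    rw [hM n, Submodule.mem_colon] at hb ⊢
    intro p hp
    have h1 := hb p hp
    rw [Submodule.mem_bot] at h1 ⊢
    have h2 : (b • p) * f = 0 := by
      rw [smul_eq_mul] at h1 ⊢
      linear_combination h1
    exact (mem_nonZeroDivisors_iff.mp hfnzd).2 _ h2
  have hMmono : ∀ n, M n ≤ M (n + 1) := by
    intro n
    rw [hM n, hM (n + 1)]
    intro x hx
    rw [Submodule.mem_colon] at hx ⊢
    intro p hp
    exact hx p (Ideal.pow_le_pow_right (by omega) hp)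
  have hM0 : M 0 = ⊥ := by
    rw [hM 0, pow_zero, Ideal.one_eq_top]
    rw [eq_bot_iff]
    intro x hx
    rw [Submodule.mem_colon] at hx
    have := hx 1 trivial
    rwa [smul_eq_mul, mul_one] at this
  -- length of the quotient of R/I by f, as an R-module
  have hlV : krullDim (Submodule R ((R ⧸ nilradical R) ⧸
      LinearMap.range (LinearMap.lsmul R (R ⧸ nilradical R) f))) = (l : WithBot ℕ∞) := by
    set J : Ideal (R ⧸ nilradical R) := Ideal.span {Ideal.Quotient.mk (nilradical R) f} with hJdef
    have hJ : LinearMap.range (LinearMap.lsmul R (R ⧸ nilradical R) f)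
        = Submodule.restrictScalars R J := by
      ext x
      simp only [LinearMap.mem_range, Submodule.restrictScalars_mem, LinearMap.lsmul_apply]
      rw [hJdef, Ideal.mem_span_singleton']
      constructor
      · rintro ⟨y, rfl⟩
        refine ⟨y, ?_⟩
        rw [mul_comm, ← Ideal.Quotient.algebraMap_eq, ← Algebra.smul_def]
      · rintro ⟨a, rfl⟩
        refine ⟨a, ?_⟩
        rw [mul_comm, ← Ideal.Quotient.algebraMap_eq, ← Algebra.smul_def]
    rw [krullDim_submodule_congr ((Submodule.quotEquivOfEq _ _ hJ).trans
      (Submodule.Quotient.restrictScalarsEquiv R J))]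
    rw [krullDim_submodule_restrictScalars
      (S := R ⧸ nilradical R) Ideal.Quotient.mk_surjective]
    exact hl
  -- main induction
  have key : ∀ k n, n + k = N →
      krullDim (Submodule R (R ⧸ (M n ⊔ Ideal.span {f})))
        = (((∑ j ∈ Finset.Ico n N, r (j + 1)) * l : ℕ) : WithBot ℕ∞) := by
    intro k
    induction k with
    | zero =>
      intro n hn
      have hn' : n = N := by omega
      subst hn'
      have htop : M n ⊔ Ideal.span {f} = ⊤ := by rw [hN]; simp
      haveI : Subsingleton (R ⧸ (M n ⊔ Ideal.span {f})) :=
        Submodule.Quotient.subsingleton_iff.mpr htop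
      rw [krullDim_submodule_subsingleton]
      rw [Finset.Ico_self, Finset.sum_empty]
      norm_num
    | succ k ih =>
      intro n hn
      have hnN : n < N := by omega
      have hsum : (∑ j ∈ Finset.Ico n N, r (j + 1)) * l
          = r (n + 1) * l + (∑ j ∈ Finset.Ico (n + 1) N, r (j + 1)) * l := by
        rw [Finset.sum_eq_sum_Ico_succ_bot hnN]
        ring
      rw [hsum]
      exact step_lemma hfnzd (hMmono n) (habs (n + 1)) (hfree n hnN).some hlV
        (ih (n + 1) (by omega))
  have hkey := key N 0 (by omega)
  have h0 : M 0 ⊔ Ideal.span {f} = Ideal.span {f} := by rw [hM0, bot_sup_eq]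
  have hcongr : krullDim (Submodule R (R ⧸ Ideal.span {f}))
      = krullDim (Submodule R (R ⧸ (M 0 ⊔ Ideal.span {f}))) :=
    krullDim_submodule_congr (Submodule.quotEquivOfEq _ _ h0.symm)
  rw [hcongr, hkey, hrt, Finset.range_eq_Ico]
end

section
/- Let R be a commutative ring, I an ideal with I ⊆ nilrad(R), and let f ∈ R act injectively (be a non-zerodivisor) on each quotient M_n/M_{n-1} of a finite filtration 0 = M_0 ⊆ M_1 ⊆ ... ⊆ M_N = R by ideals. Then the induced filtration on R/(f) has successive quotients isomorphic to (M_n/M_{n-1}) / f·(M_n/M_{n-1}); i.e., (M_n + (f)) ∩ M_{n+1} = M_n + f·M_{n+1} for each n. -/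
/-- Let `R` be a commutative ring, `I ⊆ nilrad(R)` an ideal, and
`⊥ = M 0 ⊆ M 1 ⊆ ... ⊆ M N = R` a finite filtration by ideals on whose graded pieces
`f` acts injectively.  Then the graded pieces of the induced filtration on `R/(f)` are
`(Mₙ₊₁/Mₙ)/f·(Mₙ₊₁/Mₙ)`; i.e. `(Mₙ + (f)) ∩ Mₙ₊₁ = Mₙ + f·Mₙ₊₁` for each `n < N`. -/
theorem stmt_18 {R : Type*} [CommRing R] (I : Ideal R) (hI : I ≤ nilradical R)
    (N : ℕ) (M : ℕ → Ideal R) (hmono : Monotone M)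
    (h0 : M 0 = ⊥) (hN : M N = ⊤) (f : R)
    (hinj : ∀ n < N, ∀ x ∈ M (n + 1), f * x ∈ M n → x ∈ M n) :
    ∀ n < N, (M n ⊔ Ideal.span {f}) ⊓ M (n + 1)
      = M n ⊔ Ideal.span {f} * M (n + 1) := by
  intro n hn
  have key : ∀ r : R, f * r ∈ M (n + 1) → r ∈ M (n + 1) := by
    intro r hr
    have main : ∀ j, r ∈ M (max (n + 1) (N - j)) := by
      intro j
      induction j with
      | zero =>
        have : max (n + 1) (N - 0) = N := by omega
        rw [this, hN]; trivial
      | succ j ih =>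
        by_cases h : N - j ≤ n + 1
        · have h1 : max (n + 1) (N - j) = n + 1 := by omega
          have h2 : max (n + 1) (N - (j + 1)) = n + 1 := by omega
          rw [h2]; rw [h1] at ih; exact ih
        · have h1 : max (n + 1) (N - j) = N - j := by omega
          have h2 : max (n + 1) (N - (j + 1)) = N - (j + 1) := by omega
          rw [h2]; rw [h1] at ih
          have hk : N - (j + 1) < N := by omega
          have hsucc : N - (j + 1) + 1 = N - j := by omega
          apply hinj (N - (j + 1)) hk r (by rw [hsucc]; exact ih)
          exact hmono (by omega : n + 1 ≤ N - (j + 1)) hr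
    have := main N
    simpa using this
  apply le_antisymm
  · rintro x ⟨hx1, hx2⟩
    obtain ⟨m, hm, y, hy, rfl⟩ := Submodule.mem_sup.mp hx1
    obtain ⟨r, rfl⟩ := Ideal.mem_span_singleton'.mp hy
    have hfr : f * r ∈ M (n + 1) := by
      have : r * f = (m + r * f) - m := by ring
      rw [mul_comm, this]
      exact Submodule.sub_mem _ hx2 (hmono (Nat.le_succ n) hm)
    have hr : r ∈ M (n + 1) := key r hfr
    exact Submodule.add_mem_sup hm
      (by rw [mul_comm r f]; exact Ideal.mul_mem_mul (Ideal.mem_span_singleton_self f) hr)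
  · refine sup_le (le_inf le_sup_left (hmono (Nat.le_succ n))) (le_inf ?_ ?_)
    · exact le_sup_of_le_right (Ideal.mul_le_left)
    · exact Ideal.mul_le_right
end
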